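/- In the 1-dimensional Gaussian MDP with state space ℝ, action space ℝ, transition s' = s + a/L_π + ε with ε ∼ N(0, σ²), and reward R(s,a) = −L_Q L_π |s + a/L_π|, the expected absolute value of a sum of Δ i.i.d. N(0,σ²) noises satisfies E|ε₁ + ⋯ + ε_Δ| = σ√(2Δ/π). Consequently any policy that must commit to actions based on information Δ steps old incurs per-step expected reward at most −L_Q L_π σ √(2Δ/π), giving the value function upper bound V^π(x) ≤ −(L_Q L_π/(1−γ)) · σ√(2Δ)/√π. -/

import Mathlib

open MeasureTheory ProbabilityTheory
open scoped ENNReal NNReal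

open Real Set

section auxgauss
variable (a b : ℝ≥0) (z : ℝ)

noncomputable def gdc : ℝ := ((a:ℝ) + b) / (2 * a * b)
noncomputable def gdm : ℝ := (a:ℝ) * z / ((a:ℝ) + b)
noncomputable def gdK : ℝ := (Real.sqrt (2 * π * a))⁻¹ * (Real.sqrt (2 * π * b))⁻¹
    * Real.exp (-z^2 / (2 * ((a:ℝ) + b)))

variable {a b}

lemma gdc_pos (ha : a ≠ 0) (hb : b ≠ 0) : 0 < gdc a b := by
  have hA : (0:ℝ) < a := lt_of_le_of_ne a.coe_nonneg (by exact_mod_cast Ne.symm ha)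
  have hB : (0:ℝ) < b := lt_of_le_of_ne b.coe_nonneg (by exact_mod_cast Ne.symm hb)
  unfold gdc; positivity

lemma gaussian_pdf_mul_eq (ha : a ≠ 0) (hb : b ≠ 0) (z x : ℝ) :
    gaussianPDFReal 0 a x * gaussianPDFReal x b z
      = gdK a b z * Real.exp (-(gdc a b) * (x - gdm a b z)^2) := by
  have hA : (0:ℝ) < a := lt_of_le_of_ne a.coe_nonneg (by exact_mod_cast Ne.symm ha)
  have hB : (0:ℝ) < b := lt_of_le_of_ne b.coe_nonneg (by exact_mod_cast Ne.symm hb)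
  simp only [gaussianPDFReal, sub_zero, gdK, gdc, gdm]
  rw [show (Real.sqrt (2 * π * (a:ℝ)))⁻¹ * Real.exp (-x ^ 2 / (2 * a))
      * ((Real.sqrt (2 * π * (b:ℝ)))⁻¹ * Real.exp (-(z - x) ^ 2 / (2 * b)))
    = (Real.sqrt (2 * π * (a:ℝ)))⁻¹ * ((Real.sqrt (2 * π * (b:ℝ)))⁻¹
      * Real.exp (-x ^ 2 / (2 * a) + -(z - x) ^ 2 / (2 * b))) by
      rw [Real.exp_add]; ring]
  have hexp : -x^2/(2*(a:ℝ)) + -(z-x)^2/(2*(b:ℝ))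
      = -z^2/(2*((a:ℝ)+b)) + -(((a:ℝ)+b)/(2*a*b))*(x - (a:ℝ)*z/((a:ℝ)+b))^2 := by
    field_simp; ring
  rw [hexp, Real.exp_add]
  ring

lemma gaussian_pdf_mul_integrable (ha : a ≠ 0) (hb : b ≠ 0) (z : ℝ) :
    Integrable (fun x => gaussianPDFReal 0 a x * gaussianPDFReal x b z) := by
  simp_rw [gaussian_pdf_mul_eq ha hb z]
  apply Integrable.const_mul
  have : Integrable (fun x : ℝ => Real.exp (-(gdc a b) * x^2)) :=
    integrable_exp_neg_mul_sq (gdc_pos ha hb)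
  exact this.comp_sub_right (gdm a b z)

lemma gaussian_pdf_conv (ha : a ≠ 0) (hb : b ≠ 0) (z : ℝ) :
    ∫ x, gaussianPDFReal 0 a x * gaussianPDFReal x b z
      = gaussianPDFReal 0 (a + b) z := by
  have hA : (0:ℝ) < a := lt_of_le_of_ne a.coe_nonneg (by exact_mod_cast Ne.symm ha)
  have hB : (0:ℝ) < b := lt_of_le_of_ne b.coe_nonneg (by exact_mod_cast Ne.symm hb)
  have hcpos := gdc_pos ha hb
  simp_rw [gaussian_pdf_mul_eq ha hb z]
  rw [integral_const_mul]
  have hshift : ∫ x : ℝ, Real.exp (-(gdc a b) * (x - gdm a b z)^2)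
      = ∫ x : ℝ, Real.exp (-(gdc a b) * x^2) :=
    integral_sub_right_eq_self (fun x => Real.exp (-(gdc a b) * x^2)) (gdm a b z)
  rw [hshift, integral_gaussian]
  have hconst : gdK a b z * Real.sqrt (π / gdc a b)
      = (Real.sqrt (2 * π * ((a:ℝ) + b)))⁻¹ * Real.exp (-z^2 / (2 * ((a:ℝ) + b))) := by
    rw [gdK, show (Real.sqrt (2 * π * (a:ℝ)))⁻¹ * (Real.sqrt (2 * π * (b:ℝ)))⁻¹
        * Real.exp (-z ^ 2 / (2 * ((a:ℝ) + b))) * Real.sqrt (π / gdc a b)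
      = (Real.sqrt (2 * π * (a:ℝ)))⁻¹ * (Real.sqrt (2 * π * (b:ℝ)))⁻¹ * Real.sqrt (π / gdc a b)
        * Real.exp (-z ^ 2 / (2 * ((a:ℝ) + b))) by ring]
    congr 1
    rw [← Real.sqrt_inv, ← Real.sqrt_inv,
      ← Real.sqrt_mul (by positivity), ← Real.sqrt_mul (by positivity), ← Real.sqrt_inv]
    congr 1
    rw [gdc]
    field_simp
  rw [hconst]
  simp only [gaussianPDFReal, sub_zero]
  push_cast
  norm_num

lemma integral_Ioi_mul_exp {b : ℝ} (hb : 0 < b) :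
    ∫ x in Ioi (0:ℝ), x * Real.exp (-b * x ^ 2) = (2 * b)⁻¹ := by
  have A : ∀ x : ℝ, HasDerivAt (fun x => -(2 * b)⁻¹ * Real.exp (-b * x ^ 2))
      (x * Real.exp (-b * x ^ 2)) x := by
    intro x
    convert ((hasDerivAt_pow 2 x).const_mul (-b)).exp.const_mul (-(2 * b)⁻¹) using 1
    · rfl
    · rfl
    field_simp
    ring
  have B : Filter.Tendsto (fun y : ℝ ↦ -(2 * b)⁻¹ * Real.exp (-b * y ^ 2))
      Filter.atTop (nhds 0) := by
    rw [show (0:ℝ) = -(2*b)⁻¹ * 0 by ring]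
    refine Filter.Tendsto.const_mul _ ?_
    apply Real.tendsto_exp_atBot.comp
    apply Filter.Tendsto.const_mul_atTop_of_neg (by linarith : -b < 0)
    exact Filter.tendsto_pow_atTop (by norm_num)
  have := integral_Ioi_of_hasDerivAt_of_tendsto' (a := (0:ℝ)) (fun x _ => A x)
    ((integrable_mul_exp_neg_mul_sq hb).integrableOn) B
  rw [this]
  norm_num

lemma integral_abs_gaussianReal (v : ℝ≥0) (hv : v ≠ 0) :
    ∫ x, |x| ∂(gaussianReal 0 v) = Real.sqrt (2 * v / π) := by
  have hv' : (0:ℝ) < v := lt_of_le_of_ne v.coe_nonneg (by exact_mod_cast (Ne.symm hv))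
  rw [gaussianReal_of_var_ne_zero _ hv]
  have hd : ∀ x, gaussianPDF 0 v x = ((gaussianPDFReal 0 v x).toNNReal : ℝ≥0∞) := by
    intro x; rfl
  rw [show (gaussianPDF 0 v) = fun x => ((fun x => (gaussianPDFReal 0 v x).toNNReal) x : ℝ≥0∞)
    from funext hd]
  rw [integral_withDensity_eq_integral_smul
    ((measurable_gaussianPDFReal 0 v).real_toNNReal) _]
  have heven : ∀ x : ℝ, gaussianPDFReal 0 v |x| = gaussianPDFReal 0 v x := by
    intro x
    rcases abs_choice x with h | h
    · rw [h]
    · rw [h]; simp [gaussianPDFReal, neg_sq]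
  have : ∀ x : ℝ, (gaussianPDFReal 0 v x).toNNReal • |x|
      = (fun t => gaussianPDFReal 0 v t * t) |x| := by
    intro x
    simp only [NNReal.smul_def, Real.coe_toNNReal _ (gaussianPDFReal_nonneg 0 v x), heven,
      smul_eq_mul]
  simp_rw [this]
  rw [integral_comp_abs (f := fun t => gaussianPDFReal 0 v t * t)]
  have hpdf : ∀ t : ℝ, gaussianPDFReal 0 v t * t
      = (Real.sqrt (2 * π * v))⁻¹ * (t * Real.exp (-(2*(v:ℝ))⁻¹ * t^2)) := by
    intro t
    simp only [gaussianPDFReal, sub_zero]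
    rw [show -t^2/(2*(v:ℝ)) = -(2*(v:ℝ))⁻¹ * t^2 by field_simp]
    ring
  simp_rw [hpdf]
  rw [integral_const_mul, integral_Ioi_mul_exp (by positivity),
    show (2 * ((2 * (v:ℝ))⁻¹))⁻¹ = v by field_simp]
  have h2 : Real.sqrt (2 * (v:ℝ) / π) = 2 * v / Real.sqrt (2 * π * v) := by
    rw [show 2*(v:ℝ)/π = (2*v)^2 / (2*π*v) by field_simp,
      Real.sqrt_div (sq_nonneg _), Real.sqrt_sq (by positivity)]
  rw [h2]
  field_simp
end auxgauss

lemma gaussian_map_add {Ω : Type*} [MeasurableSpace Ω] (P : Measure Ω) [IsProbabilityMeasure P]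
    {X Y : Ω → ℝ} (hX : Measurable X) (hY : Measurable Y)
    (hXY : IndepFun X Y P) {a b : ℝ≥0} (ha : a ≠ 0) (hb : b ≠ 0)
    (hmX : P.map X = gaussianReal 0 a) (hmY : P.map Y = gaussianReal 0 b) :
    P.map (fun ω => X ω + Y ω) = gaussianReal 0 (a + b) := by
  have hab : a + b ≠ 0 := by
    intro h
    exact ha (by simpa using congrArg (·) h ▸ (add_eq_zero.mp h).1)
  have hjm : Measurable (fun p : ℝ × ℝ => gaussianPDFReal p.1 b p.2) := by
    apply Continuous.measurable
    unfold gaussianPDFReal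
    fun_prop
  ext s hs
  rw [Measure.map_apply (f := fun ω => X ω + Y ω) (hX.add hY) hs]
  have hadds : MeasurableSet ((fun p : ℝ × ℝ => p.1 + p.2) ⁻¹' s) :=
    (measurable_fst.add measurable_snd) hs
  have hpair : P.map (fun ω => (X ω, Y ω)) = (P.map X).prod (P.map Y) :=
    (indepFun_iff_map_prod_eq_prod_map_map hX.aemeasurable hY.aemeasurable).mp hXY
  have h1 : P ((fun ω => X ω + Y ω) ⁻¹' s)
      = ((P.map X).prod (P.map Y)) ((fun p : ℝ × ℝ => p.1 + p.2) ⁻¹' s) := by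
    rw [← hpair, Measure.map_apply (hX.prodMk hY) hadds]
    rfl
  rw [h1, hmX, hmY, Measure.prod_apply hadds]
  have h2 : ∀ x : ℝ, (gaussianReal 0 b) (Prod.mk x ⁻¹' ((fun p : ℝ × ℝ => p.1 + p.2) ⁻¹' s))
      = ∫⁻ z in s, gaussianPDF x b z := by
    intro x
    have : Prod.mk x ⁻¹' ((fun p : ℝ × ℝ => p.1 + p.2) ⁻¹' s) = (fun y => x + y) ⁻¹' s := rfl
    rw [this, ← Measure.map_apply (measurable_const_add x) hs,
      gaussianReal_map_const_add, zero_add, gaussianReal_apply _ hb]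
  simp_rw [h2]
  rw [gaussianReal_of_var_ne_zero _ ha,
    lintegral_withDensity_eq_lintegral_mul _ (measurable_gaussianPDF 0 a)
      (Measurable.lintegral_prod_right (f := fun x z => gaussianPDF x b z)
        (ENNReal.measurable_ofReal.comp hjm))]
  have hstep : ∀ x : ℝ, gaussianPDF 0 a x * ∫⁻ z in s, gaussianPDF x b z
      = ∫⁻ z in s, gaussianPDF 0 a x * gaussianPDF x b z := fun x =>
    (lintegral_const_mul _ ((ENNReal.measurable_ofReal.comp hjm).comp
      measurable_prodMk_left)).symm
  simp only [Pi.mul_apply]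
  simp_rw [hstep]
  rw [lintegral_lintegral_swap]
  · have h3 : ∀ z : ℝ, ∫⁻ x, gaussianPDF 0 a x * gaussianPDF x b z
        = gaussianPDF 0 (a + b) z := by
      intro z
      simp_rw [gaussianPDF,
        ← ENNReal.ofReal_mul (gaussianPDFReal_nonneg 0 a _)]
      rw [← ofReal_integral_eq_lintegral_ofReal (gaussian_pdf_mul_integrable ha hb z)
        (ae_of_all _ fun x => mul_nonneg (gaussianPDFReal_nonneg _ _ _)
          (gaussianPDFReal_nonneg _ _ _))]
      rw [gaussian_pdf_conv ha hb z]
    simp_rw [h3]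
    rw [← gaussianReal_apply _ hab s]
  · apply Measurable.aemeasurable
    exact ((measurable_gaussianPDF 0 a).comp measurable_fst).mul
      (ENNReal.measurable_ofReal.comp hjm)

lemma gaussian_map_sum {Ω : Type*} [MeasurableSpace Ω] (P : Measure Ω) [IsProbabilityMeasure P]
    {n : ℕ} (ε : Fin n → Ω → ℝ) (hmeas : ∀ i, Measurable (ε i))
    (hindep : iIndepFun ε P)
    {v : ℝ≥0} (hv : v ≠ 0) (hgauss : ∀ i, P.map (ε i) = gaussianReal 0 v)
    (s : Finset (Fin n)) :
    s.Nonempty → P.map (fun ω => ∑ i ∈ s, ε i ω) = gaussianReal 0 ((s.card : ℝ≥0) * v) := by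
  induction s using Finset.cons_induction with
  | empty => intro h; exact absurd h (by simp)
  | cons a t hat ih =>
    intro _
    rcases t.eq_empty_or_nonempty with ht | ht
    · subst ht
      simp only [Finset.cons_empty, Finset.sum_singleton, Finset.card_singleton,
        Nat.cast_one, one_mul]
      exact hgauss a
    · have hsum_meas : Measurable (fun ω => ∑ i ∈ t, ε i ω) := by
        apply Finset.measurable_sum
        exact fun i _ => hmeas i
      have hindep2 : IndepFun (ε a) (fun ω => ∑ i ∈ t, ε i ω) P := by
        have := (hindep.indepFun_finsetSum_of_notMem hmeas hat).symm
        have hfun : (∑ i ∈ t, ε i) = fun ω => ∑ i ∈ t, ε i ω := by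
          funext ω; exact Finset.sum_apply ω t ε
        rwa [hfun] at this
      have hmapsum := ih ht
      have := gaussian_map_add P (hmeas a) hsum_meas hindep2 hv
        (by
          intro h
          rw [mul_eq_zero] at h
          rcases h with h | h
          · exact absurd (Nat.cast_eq_zero.mp h) (Finset.card_ne_zero_of_mem ht.choose_spec)
          · exact hv h)
        (hgauss a) hmapsum
      have hsum_eq : (fun ω => ∑ i ∈ Finset.cons a t hat, ε i ω)
          = fun ω => ε a ω + ∑ i ∈ t, ε i ω := by
        funext ω; rw [Finset.sum_cons]
      rw [hsum_eq, this]
      congr 1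
      rw [Finset.card_cons]
      push_cast
      ring

/-- Gaussian absolute-moment identity and the resulting delayed value upper bound:
the expected absolute value of a sum of `Δ` i.i.d. `N(0,σ²)` noises is `σ√(2Δ/π)`;
consequently, if every per-step expected reward of a `Δ`-delayed policy is at most
`−L_Q L_π σ √(2Δ/π)` and the value is the discounted sum of these rewards, then
`V ≤ −(L_Q L_π/(1−γ)) · σ√(2Δ)/√π`. -/
theorem gaussian_delay_value_upper_bound
    (Δ : ℕ) (hΔ : 0 < Δ) (σ : ℝ) (hσ : 0 < σ)
    (LQ Lπ γ : ℝ) (hLQ : 0 < LQ) (hLπ : 0 < Lπ) (hγ0 : 0 < γ) (hγ1 : γ < 1)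
    -- Δ i.i.d. N(0, σ²) noises on a probability space (Ω, P)
    {Ω : Type*} [MeasurableSpace Ω] (P : Measure Ω) [IsProbabilityMeasure P]
    (ε : Fin Δ → Ω → ℝ)
    (hmeas : ∀ i, Measurable (ε i))
    (hindep : iIndepFun ε P)
    (hgauss : ∀ i, P.map (ε i) = gaussianReal 0 (σ.toNNReal ^ 2))
    -- delayed value: discounted sum of per-step expected rewards r t
    (V : ℝ) (r : ℕ → ℝ)
    (hsum : Summable (fun t => γ ^ t * r t))
    (hV : V = ∑' t, γ ^ t * r t)
    (hr : ∀ t, r t ≤ -(LQ * Lπ * σ * Real.sqrt (2 * Δ / Real.pi))) :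
    (∫ ω, |∑ i, ε i ω| ∂P = σ * Real.sqrt (2 * Δ / Real.pi)) ∧
    V ≤ -(LQ * Lπ / (1 - γ)) * σ * Real.sqrt (2 * Δ) / Real.sqrt Real.pi := by
  have hv : (σ.toNNReal ^ 2 : ℝ≥0) ≠ 0 := by
    have h0 : σ.toNNReal ≠ 0 := by
      simp only [ne_eq, Real.toNNReal_eq_zero, not_le]
      exact hσ
    exact pow_ne_zero 2 h0
  constructor
  · -- part 1
    have hunion : (Finset.univ : Finset (Fin Δ)).Nonempty := ⟨⟨0, hΔ⟩, Finset.mem_univ _⟩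
    have hmap := gaussian_map_sum P ε hmeas hindep hv hgauss Finset.univ hunion
    have hS : Measurable (fun ω => ∑ i, ε i ω) :=
      Finset.measurable_sum _ (fun i _ => hmeas i)
    have h1 : ∫ ω, |∑ i, ε i ω| ∂P = ∫ x, |x| ∂(P.map (fun ω => ∑ i, ε i ω)) :=
      (integral_map hS.aemeasurable continuous_abs.aestronglyMeasurable).symm
    rw [h1, hmap, integral_abs_gaussianReal _ (by
      simp only [ne_eq, mul_eq_zero, not_or]
      exact ⟨by simp [Finset.card_univ]; omega, hv⟩)]
    have hcoe : (((Finset.univ : Finset (Fin Δ)).card : ℝ≥0) * σ.toNNReal ^ 2 : ℝ≥0)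
        = (Δ : ℝ) * σ^2 := by
      push_cast
      rw [Real.coe_toNNReal _ hσ.le, Finset.card_univ, Fintype.card_fin]
    rw [show ((((Finset.univ : Finset (Fin Δ)).card : ℝ≥0) * σ.toNNReal ^ 2 : ℝ≥0) : ℝ)
      = (Δ : ℝ) * σ^2 from hcoe]
    rw [show 2 * ((Δ : ℝ) * σ^2) / π = σ^2 * (2 * Δ / π) by ring]
    rw [Real.sqrt_mul (sq_nonneg σ), Real.sqrt_sq hσ.le]
  · -- part 2
    set C : ℝ := LQ * Lπ * σ * Real.sqrt (2 * Δ / π) with hC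
    have hsum2 : Summable (fun t : ℕ => γ ^ t * (-C)) :=
      (summable_geometric_of_lt_one hγ0.le hγ1).mul_right _
    have hle : V ≤ ∑' t : ℕ, γ ^ t * (-C) := by
      rw [hV]
      exact hsum.tsum_le_tsum (fun t => mul_le_mul_of_nonneg_left (hr t)
        (pow_nonneg hγ0.le t)) hsum2
    have heq : ∑' t : ℕ, γ ^ t * (-C) = (1 - γ)⁻¹ * (-C) := by
      rw [tsum_mul_right, tsum_geometric_of_lt_one hγ0.le hγ1]
    have hsq : Real.sqrt (2 * Δ / π) = Real.sqrt (2 * Δ) / Real.sqrt π :=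
      Real.sqrt_div (by positivity) π
    have h1γ : (0:ℝ) < 1 - γ := by linarith
    refine hle.trans ?_
    rw [heq, hC, hsq]
    rw [show (1 - γ)⁻¹ * -(LQ * Lπ * σ * (Real.sqrt (2 * Δ) / Real.sqrt π))
      = -(LQ * Lπ / (1 - γ)) * σ * Real.sqrt (2 * Δ) / Real.sqrt π by field_simp]
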